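/- In a single-controller constrained average-cost MDP with finite states and actions, single ergodic class under every stationary policy, and a strictly feasible stationary policy (Slater point: a stationary v with occupation-measure costs ⟨c_j, f(v)⟩ ≤ V_j − η for all j and some η > 0), the constrained linear program — minimize ⟨c₀, z⟩ over z ∈ Δ(K) satisfying the balance equations and ⟨c_j, z⟩ ≤ V_j — has an optimal solution z*, and any stationary policy obtained by normalizing z* achieves average cost ⟨c₀, z*⟩ and satisfies all constraints. -/

import Mathlib

/-- In a single-controller constrained average-cost MDP with
finite states and actions, a single ergodic class under every stationary
policy (so every stationary policy `w` has a unique invariant distribution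
`π w`, and its average `c_j`-cost equals `⟨c_j, f w⟩` with
`f w (y,a) = π w y * w (a|y)`), and a strictly feasible stationary policy
(Slater point), the constrained LP has an optimal solution `z*`, and any
stationary policy obtained by normalizing `z*` has average cost `⟨c₀, z*⟩`
and satisfies all the constraints. -/
theorem constrained_lp_optimal_and_normalized_policy
    (X : Type*) [Fintype X] [DecidableEq X]
    (A : X → Type*) [∀ x, Fintype (A x)] [∀ x, Nonempty (A x)]
    (P : (Σ x : X, A x) → X → ℝ)
    (hP0 : ∀ k r, 0 ≤ P k r) (hP1 : ∀ k, ∑ r : X, P k r = 1)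
    (Pol : Set (∀ x : X, A x → ℝ))
    (hPol : Pol = {u | (∀ x a, 0 ≤ u x a) ∧ ∀ x, ∑ a, u x a = 1})
    (π : (∀ x : X, A x → ℝ) → (X → ℝ))
    (hπ : ∀ w ∈ Pol, ((∀ y, 0 ≤ π w y) ∧ (∑ y, π w y = 1) ∧
        ∀ r, ∑ y, π w y * ∑ a, w y a * P ⟨y, a⟩ r = π w r) ∧
      ∀ π' : X → ℝ, ((∀ y, 0 ≤ π' y) ∧ (∑ y, π' y = 1) ∧
        ∀ r, ∑ y, π' y * ∑ a, w y a * P ⟨y, a⟩ r = π' r) → π' = π w)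
    (f : (∀ x : X, A x → ℝ) → ((Σ x : X, A x) → ℝ))
    (hf : ∀ w k, f w k = π w k.1 * w k.1 k.2)
    (B : ℕ) (c : Fin (B + 1) → (Σ x : X, A x) → ℝ) (V : Fin B → ℝ)
    (Feas : Set ((Σ x : X, A x) → ℝ))
    (hFeas : Feas = {z | (∀ k, 0 ≤ z k) ∧ (∑ k, z k = 1) ∧
        (∀ r : X, ∑ k : Σ x : X, A x,
          z k * ((if k.1 = r then (1 : ℝ) else 0) - P k r) = 0) ∧
        ∀ j : Fin B, ∑ k, c j.succ k * z k ≤ V j})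
    (η : ℝ) (hη : 0 < η)
    (hslater : ∃ v ∈ Pol, ∀ j : Fin B, ∑ k, c j.succ k * f v k ≤ V j - η) :
    ∃ z_star ∈ Feas,
      (∀ z ∈ Feas, ∑ k, c 0 k * z_star k ≤ ∑ k, c 0 k * z k) ∧
      ∀ w ∈ Pol,
        (∀ y : X, 0 < ∑ b, z_star ⟨y, b⟩ →
          ∀ a : A y, w y a = z_star ⟨y, a⟩ / ∑ b, z_star ⟨y, b⟩) →
        (∑ k, c 0 k * f w k = ∑ k, c 0 k * z_star k) ∧
        ∀ j : Fin B, ∑ k, c j.succ k * f w k ≤ V j := by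
  classical
  obtain ⟨v, hvPol, hvslater⟩ := hslater
  have hvPol' := hvPol
  rw [hPol] at hvPol'
  obtain ⟨hv0, hv1⟩ := hvPol'
  obtain ⟨⟨hπv0, hπv1, hπvinv⟩, _⟩ := hπ v hvPol
  -- f v is feasible
  have hfv : f v ∈ Feas := by
    rw [hFeas]
    refine ⟨?_, ?_, ?_, ?_⟩
    · intro k; rw [hf]; exact mul_nonneg (hπv0 _) (hv0 _ _)
    · rw [← Finset.univ_sigma_univ, Finset.sum_sigma]
      simp only [hf]
      calc ∑ x : X, ∑ a : A x, π v x * v x a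
          = ∑ x : X, π v x * ∑ a : A x, v x a := by
            simp [Finset.mul_sum]
        _ = 1 := by simp [hv1, hπv1]
    · intro r
      rw [← Finset.univ_sigma_univ, Finset.sum_sigma]
      simp only [hf, mul_sub]
      rw [Finset.sum_congr rfl (fun x _ => Finset.sum_sub_distrib _ _)]
      rw [Finset.sum_sub_distrib]
      have h1 : ∑ x : X, ∑ a : A x,
          π v x * v x a * (if (⟨x, a⟩ : Σ x, A x).1 = r then (1:ℝ) else 0)
          = π v r := by
        simp only []
        calc ∑ x : X, ∑ a : A x, π v x * v x a * (if x = r then (1:ℝ) else 0)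
            = ∑ x : X, if x = r then π v x * ∑ a : A x, v x a else 0 := by
              refine Finset.sum_congr rfl (fun x _ => ?_)
              by_cases hx : x = r <;> simp [hx, Finset.mul_sum]
          _ = π v r := by simp [hv1]
      have h2 : ∑ x : X, ∑ a : A x,
          π v x * v x a * P ⟨x, a⟩ r = π v r := by
        rw [← hπvinv r]
        refine Finset.sum_congr rfl (fun x _ => ?_)
        rw [Finset.mul_sum]
        exact Finset.sum_congr rfl (fun a _ => by ring)
      rw [h1, h2, sub_self]
    · intro j
      exact le_trans (hvslater j) (by linarith)
  -- Feas is compact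
  have hclosed : IsClosed Feas := by
    rw [hFeas]
    have hA : IsClosed {z : (Σ x : X, A x) → ℝ | ∀ k, 0 ≤ z k} := by
      have : {z : (Σ x : X, A x) → ℝ | ∀ k, 0 ≤ z k}
          = ⋂ k, {z | 0 ≤ z k} := by ext z; simp [Set.mem_iInter]
      rw [this]
      exact isClosed_iInter fun k => isClosed_le continuous_const (continuous_apply k)
    have hB : IsClosed {z : (Σ x : X, A x) → ℝ | ∑ k, z k = 1} :=
      isClosed_eq (continuous_finset_sum _ fun k _ => continuous_apply k) continuous_const
    have hC : IsClosed {z : (Σ x : X, A x) → ℝ | ∀ r : X, ∑ k : Σ x : X, A x,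
        z k * ((if k.1 = r then (1 : ℝ) else 0) - P k r) = 0} := by
      have : {z : (Σ x : X, A x) → ℝ | ∀ r : X, ∑ k : Σ x : X, A x,
          z k * ((if k.1 = r then (1 : ℝ) else 0) - P k r) = 0}
          = ⋂ r, {z | ∑ k : Σ x : X, A x,
          z k * ((if k.1 = r then (1 : ℝ) else 0) - P k r) = 0} := by
        ext z; simp [Set.mem_iInter]
      rw [this]
      exact isClosed_iInter fun r => isClosed_eq
        (continuous_finset_sum _ fun k _ => (continuous_apply k).mul continuous_const)
        continuous_const
    have hD : IsClosed {z : (Σ x : X, A x) → ℝ |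
        ∀ j : Fin B, ∑ k, c j.succ k * z k ≤ V j} := by
      have : {z : (Σ x : X, A x) → ℝ | ∀ j : Fin B, ∑ k, c j.succ k * z k ≤ V j}
          = ⋂ j, {z | ∑ k, c j.succ k * z k ≤ V j} := by
        ext z; simp [Set.mem_iInter]
      rw [this]
      exact isClosed_iInter fun j => isClosed_le
        (continuous_finset_sum _ fun k _ => continuous_const.mul (continuous_apply k))
        continuous_const
    simp only [Set.setOf_and]
    exact (hA.inter (hB.inter (hC.inter hD)))
  have hsub : Feas ⊆ Set.Icc (fun _ => (0:ℝ)) (fun _ => (1:ℝ)) := by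
    intro z hz
    rw [hFeas] at hz
    obtain ⟨hz0, hz1, _, _⟩ := hz
    constructor
    · intro k; exact hz0 k
    · intro k
      calc z k ≤ ∑ k', z k' :=
            Finset.single_le_sum (fun k' _ => hz0 k') (Finset.mem_univ k)
        _ = 1 := hz1
  have hcompact : IsCompact Feas :=
    isCompact_Icc.of_isClosed_subset hclosed hsub
  have hcont : Continuous (fun z : (Σ x : X, A x) → ℝ => ∑ k, c 0 k * z k) :=
    continuous_finset_sum _ fun k _ => continuous_const.mul (continuous_apply k)
  obtain ⟨z_star, hzF, hzmin⟩ :=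
    hcompact.exists_isMinOn ⟨f v, hfv⟩ hcont.continuousOn
  refine ⟨z_star, hzF, fun z hz => hzmin hz, ?_⟩
  -- normalized policy part
  intro w hwPol hnorm
  have hzF' := hzF
  rw [hFeas] at hzF'
  obtain ⟨hz0, hz1, hzbal, hzcon⟩ := hzF'
  set ρ : X → ℝ := fun y => ∑ b, z_star ⟨y, b⟩ with hρ
  have hρ0 : ∀ y, 0 ≤ ρ y := fun y => Finset.sum_nonneg fun b _ => hz0 _
  -- balance rearranged
  have hbal : ∀ r : X, ∑ k : Σ x : X, A x, z_star k * P k r = ρ r := by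
    intro r
    have := hzbal r
    simp only [mul_sub] at this
    rw [Finset.sum_sub_distrib, sub_eq_zero] at this
    rw [← this]
    rw [← Finset.univ_sigma_univ, Finset.sum_sigma]
    calc ∑ x : X, ∑ a : A x,
        z_star ⟨x, a⟩ * (if (⟨x,a⟩ : Σ x, A x).1 = r then (1:ℝ) else 0)
        = ∑ x : X, if x = r then ρ x else 0 := by
          refine Finset.sum_congr rfl (fun x _ => ?_)
          by_cases hx : x = r
          · subst hx; simp [hρ]
          · simp [hx]
      _ = ρ r := by simp
  have hzzero : ∀ (y : X), ρ y = 0 → ∀ a : A y, z_star ⟨y, a⟩ = 0 := by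
    intro y hy a
    have := (Finset.sum_eq_zero_iff_of_nonneg (fun b _ => hz0 ⟨y, b⟩)).mp hy
    exact this a (Finset.mem_univ a)
  obtain ⟨hwPol2, hwuniq⟩ := hπ w hwPol
  have hwPol' := hwPol
  rw [hPol] at hwPol'
  obtain ⟨hw0, hw1⟩ := hwPol'
  -- ρ is invariant for w
  have hρinv : ∀ r, ∑ y, ρ y * ∑ a, w y a * P ⟨y, a⟩ r = ρ r := by
    intro r
    have step : ∀ y : X, ρ y * ∑ a, w y a * P ⟨y, a⟩ r
        = ∑ a, z_star ⟨y, a⟩ * P ⟨y, a⟩ r := by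
      intro y
      rcases lt_or_eq_of_le (hρ0 y) with hpos | hzero
      · rw [Finset.mul_sum]
        refine Finset.sum_congr rfl (fun a _ => ?_)
        rw [hnorm y hpos a]
        rw [show ρ y = ∑ b, z_star ⟨y, b⟩ from rfl] at hpos ⊢
        field_simp [hpos.ne']
      · have hz : ρ y = 0 := hzero.symm
        rw [hz, zero_mul]
        exact (Finset.sum_eq_zero fun a _ => by
          rw [hzzero y hz a, zero_mul]).symm
    rw [Finset.sum_congr rfl (fun y _ => step y), ← hbal r,
      ← Finset.univ_sigma_univ, Finset.sum_sigma]
  have hρsum : ∑ y, ρ y = 1 := by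
    rw [← hz1, ← Finset.univ_sigma_univ, Finset.sum_sigma]
  have hρeq : ρ = π w := hwuniq ρ ⟨hρ0, hρsum, hρinv⟩
  -- f w = z_star
  have hkey : ∀ k : Σ x : X, A x, f w k = z_star k := by
    intro k
    rw [hf, ← hρeq]
    rcases lt_or_eq_of_le (hρ0 k.1) with hpos | hzero
    · rw [hnorm k.1 hpos k.2]
      rw [show ρ k.1 = ∑ b, z_star ⟨k.1, b⟩ from rfl] at hpos ⊢
      field_simp [hpos.ne']
    · symm at hzero
      rw [hzero, zero_mul]
      exact (hzzero k.1 hzero k.2).symm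
  constructor
  · exact Finset.sum_congr rfl fun k _ => by rw [hkey k]
  · intro j
    calc ∑ k, c j.succ k * f w k = ∑ k, c j.succ k * z_star k :=
          Finset.sum_congr rfl fun k _ => by rw [hkey k]
      _ ≤ V j := hzcon j
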